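/- The infinite series ∑_{k=1}^∞ ( H_k⁴/(3k) - H_{k+1}⁴/(k+1) + H_{k+2}⁴/(k+2) - H_{k+3}⁴/(3(k+3)) ) converges and equals -577/5832. -/
import Mathlib

/-- `harm k` is the `k`-th harmonic number `H_k = 1 + 1/2 + ⋯ + 1/k`. -/
noncomputable def harm (k : ℕ) : ℝ := ∑ i ∈ Finset.range k, (1 : ℝ) / (i + 1)

/-- `zeta m = ∑_{k=1}^∞ 1/k^m`, the Riemann zeta function at a natural argument. -/
noncomputable def zeta (m : ℕ) : ℝ := ∑' n : ℕ, (1 : ℝ) / (n + 1) ^ m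

open Filter Real

noncomputable def Aaux (k : ℕ) : ℝ := harm (k + 1) ^ 4 / ((k : ℝ) + 1)

lemma harm_eq_harmonic (k : ℕ) : harm k = (harmonic k : ℝ) := by
  unfold harm harmonic
  push_cast
  simp [one_div]

lemma harm_nonneg (k : ℕ) : 0 ≤ harm k := by
  unfold harm; positivity

lemma harm_succ (k : ℕ) : harm (k + 1) = harm k + 1 / ((k : ℝ) + 1) := by
  simp [harm, Finset.sum_range_succ]

lemma harm_tendsto : Tendsto (fun k : ℕ => harm k) atTop atTop :=
  tendsto_sum_range_one_div_nat_succ_atTop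

lemma Aaux_nonneg (k : ℕ) : 0 ≤ Aaux k := by
  unfold Aaux
  have := harm_nonneg (k + 1)
  positivity

lemma Aaux_tendsto_zero : Tendsto Aaux atTop (nhds 0) := by
  have hbound : ∀ᶠ k : ℕ in atTop, Aaux k ≤ 16 * (Real.log ((k : ℝ) + 1)) ^ 4 / ((k : ℝ) + 1) := by
    filter_upwards [eventually_ge_atTop 3] with k hk
    have hx1 : (3 : ℝ) ≤ (k : ℝ) := by exact_mod_cast hk
    have hexp : Real.exp 1 ≤ (k : ℝ) + 1 := by
      have := Real.exp_one_lt_d9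
      linarith
    have hlog : 1 ≤ Real.log ((k : ℝ) + 1) :=
      calc (1 : ℝ) = Real.log (Real.exp 1) := (Real.log_exp 1).symm
      _ ≤ Real.log ((k : ℝ) + 1) := Real.log_le_log (Real.exp_pos 1) hexp
    have hharm : harm (k + 1) ≤ 2 * Real.log ((k : ℝ) + 1) := by
      have h1 : harm (k + 1) ≤ 1 + Real.log ((k : ℝ) + 1) := by
        rw [harm_eq_harmonic]
        have := harmonic_le_one_add_log (k + 1)
        push_cast at this ⊢
        convert this using 3
      linarith
    have hh0 : 0 ≤ harm (k + 1) := harm_nonneg _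
    have hpow : harm (k + 1) ^ 4 ≤ (2 * Real.log ((k : ℝ) + 1)) ^ 4 :=
      pow_le_pow_left₀ hh0 hharm 4
    unfold Aaux
    calc harm (k + 1) ^ 4 / ((k : ℝ) + 1)
        ≤ (2 * Real.log ((k : ℝ) + 1)) ^ 4 / ((k : ℝ) + 1) := by
          apply div_le_div_of_nonneg_right hpow (by positivity) |>.trans le_rfl
      _ = 16 * (Real.log ((k : ℝ) + 1)) ^ 4 / ((k : ℝ) + 1) := by ring
  have hlim : Tendsto (fun k : ℕ => 16 * (Real.log ((k : ℝ) + 1)) ^ 4 / ((k : ℝ) + 1)) atTop (nhds 0) := by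
    have h1 : Tendsto (fun x : ℝ => Real.log x ^ 4 / (1 * x + 0)) atTop (nhds 0) :=
      Real.tendsto_pow_log_div_mul_add_atTop 1 0 4 one_ne_zero
    have h2 : Tendsto (fun k : ℕ => (k : ℝ) + 1) atTop atTop :=
      tendsto_atTop_add_const_right _ _ tendsto_natCast_atTop_atTop
    have h3 := (h1.comp h2).const_mul (16 : ℝ)
    simp only [Function.comp] at h3
    convert h3 using 2 with k
    · ring
    · ring
  exact squeeze_zero' (Eventually.of_forall fun k => Aaux_nonneg k) hbound hlim

lemma Aaux_antitone_of_large {k : ℕ} (hk : 15 ≤ harm (k + 1)) : Aaux (k + 1) ≤ Aaux k := by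
  have hs : harm (k + 2) = harm (k + 1) + 1 / ((k : ℝ) + 2) := by
    rw [show k + 2 = (k + 1) + 1 from rfl, harm_succ]
    push_cast; ring
  unfold Aaux
  push_cast
  rw [show ((k : ℝ) + 1 + 1) = (k : ℝ) + 2 by ring, hs]
  obtain ⟨h, hh⟩ : ∃ h, harm (k + 1) = h := ⟨_, rfl⟩
  rw [hh] at hk ⊢
  obtain ⟨x, hx⟩ : ∃ x : ℝ, (k : ℝ) + 1 = x := ⟨_, rfl⟩
  have hx1 : 1 ≤ x := by
    rw [← hx]; have : (0:ℝ) ≤ (k:ℝ) := Nat.cast_nonneg k; linarith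
  have hx2 : (k : ℝ) + 2 = x + 1 := by rw [← hx]; ring
  rw [hx, hx2]
  have hxpos : (0:ℝ) < x := by linarith
  have hxp1 : (0:ℝ) < x + 1 := by linarith
  rw [div_le_div_iff₀ hxp1 hxpos]
  obtain ⟨e, he⟩ : ∃ e : ℝ, 1 / (x + 1) = e := ⟨_, rfl⟩
  rw [he]
  have hepos : 0 < e := by rw [← he]; positivity
  have he1 : e * (x + 1) = 1 := by rw [← he]; field_simp
  have heh : e ≤ 1 := by rw [← he, div_le_one hxp1]; linarith
  have heh2 : e ≤ h := by linarith
  have hkey : (h + e) ^ 4 ≤ h ^ 4 + 15 * h ^ 3 * e := by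
    nlinarith [pow_nonneg hepos.le 2, pow_nonneg hepos.le 3, sq_nonneg e, sq_nonneg h,
      mul_nonneg hepos.le (le_trans (by norm_num) hk), sq_nonneg (h - e),
      mul_le_mul_of_nonneg_right heh2 (sq_nonneg e), mul_le_mul_of_nonneg_right heh2 hepos.le]
  have h15 : 15 * h ^ 3 * e * x ≤ h ^ 4 := by
    have hex : e * x ≤ 1 := by
      calc e * x ≤ e * (x + 1) := by nlinarith
      _ = 1 := he1
    have h5 : 15 * e * x ≤ h := by nlinarith
    calc 15 * h ^ 3 * e * x = (15 * e * x) * h ^ 3 := by ring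
    _ ≤ h * h ^ 3 := mul_le_mul_of_nonneg_right h5 (by positivity)
    _ = h ^ 4 := by ring
  calc (h + e) ^ 4 * x ≤ (h ^ 4 + 15 * h ^ 3 * e) * x :=
        mul_le_mul_of_nonneg_right hkey hxpos.le
    _ = h ^ 4 * x + 15 * h ^ 3 * e * x := by ring
    _ ≤ h ^ 4 * x + h ^ 4 := by linarith
    _ = h ^ 4 * (x + 1) := by ring

lemma exists_anti : ∃ N : ℕ, ∀ k ≥ N, Aaux (k + 1) ≤ Aaux k := by
  have := harm_tendsto.eventually_ge_atTop 15
  rw [eventually_atTop] at this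
  obtain ⟨N, hN⟩ := this
  exact ⟨N, fun k hk => Aaux_antitone_of_large (hN (k + 1) (by omega))⟩

lemma summable_diff : Summable (fun k : ℕ => Aaux k - Aaux (k + 1)) := by
  obtain ⟨N, hN⟩ := exists_anti
  rw [← summable_nat_add_iff N]
  apply summable_of_sum_range_le (c := Aaux N)
  · intro k
    exact sub_nonneg.mpr (hN (k + N) (Nat.le_add_left N k))
  · intro n
    have key : ∑ i ∈ Finset.range n, (Aaux (i + N) - Aaux (i + N + 1)) = Aaux N - Aaux (n + N) := by
      induction n with
      | zero => simp
      | succ m ih => rw [Finset.sum_range_succ, ih]; ring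
    rw [key]
    have := Aaux_nonneg (n + N)
    linarith

theorem stmt_8 :
    HasSum (fun k : ℕ =>
      harm (k + 1) ^ 4 / (3 * ((k : ℝ) + 1)) - harm (k + 2) ^ 4 / ((k : ℝ) + 2)
        + harm (k + 3) ^ 4 / ((k : ℝ) + 3) - harm (k + 4) ^ 4 / (3 * ((k : ℝ) + 4)))
      (-577 / 5832) := by
  set f : ℕ → ℝ := fun k =>
      harm (k + 1) ^ 4 / (3 * ((k : ℝ) + 1)) - harm (k + 2) ^ 4 / ((k : ℝ) + 2)
        + harm (k + 3) ^ 4 / ((k : ℝ) + 3) - harm (k + 4) ^ 4 / (3 * ((k : ℝ) + 4)) with hf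
  have hA : ∀ k : ℕ, f k = Aaux k / 3 - Aaux (k + 1) + Aaux (k + 2) - Aaux (k + 3) / 3 := by
    intro k
    simp only [hf, Aaux]
    have h1 : ((k:ℝ) + 1) ≠ 0 := by positivity
    have h2 : ((k:ℝ) + 2) ≠ 0 := by positivity
    have h3 : ((k:ℝ) + 3) ≠ 0 := by positivity
    have h4 : ((k:ℝ) + 4) ≠ 0 := by positivity
    push_cast
    field_simp
    ring
  set G : ℕ → ℝ := fun k => Aaux k / 3 - 2 * Aaux (k + 1) / 3 + Aaux (k + 2) / 3 with hG
  have hfG : ∀ k, f k = G k - G (k + 1) := by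
    intro k
    rw [hA k]
    simp only [hG]
    ring
  have hsum : Summable f := by
    have h0 : Summable (fun k : ℕ => Aaux k - Aaux (k + 1)) := summable_diff
    have h1 : Summable (fun k : ℕ => Aaux (k + 1) - Aaux (k + 2)) := by
      have := (summable_nat_add_iff 1).2 h0
      exact this.congr fun k => by norm_num
    have h2 : Summable (fun k : ℕ => Aaux (k + 2) - Aaux (k + 3)) := by
      have := (summable_nat_add_iff 2).2 h0
      exact this.congr fun k => by norm_num
    have hcomb : Summable (fun k : ℕ =>
        (Aaux k - Aaux (k+1)) / 3 - 2 * (Aaux (k+1) - Aaux (k+2)) / 3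
          + (Aaux (k+2) - Aaux (k+3)) / 3) :=
      (((h0.div_const 3).sub (((h1.mul_left 2).div_const 3))).add (h2.div_const 3))
    apply hcomb.congr
    intro k
    rw [hA k]
    ring
  rw [hsum.hasSum_iff_tendsto_nat]
  have hps : ∀ n, ∑ i ∈ Finset.range n, f i = G 0 - G n := by
    intro n
    rw [Finset.sum_congr rfl fun i _ => hfG i]
    induction n with
    | zero => simp
    | succ m ih => rw [Finset.sum_range_succ, ih]; ring
  simp only [hps]
  have hGlim : Tendsto G atTop (nhds 0) := by
    have h1 := Aaux_tendsto_zero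
    have h2 : Tendsto (fun k : ℕ => Aaux (k + 1)) atTop (nhds 0) :=
      h1.comp (tendsto_add_atTop_nat 1)
    have h3 : Tendsto (fun k : ℕ => Aaux (k + 2)) atTop (nhds 0) :=
      h1.comp (tendsto_add_atTop_nat 2)
    have := ((h1.div_const 3).sub ((h2.const_mul 2).div_const 3)).add (h3.div_const 3)
    simpa using this
  have hG0 : G 0 = -577 / 5832 := by
    simp only [hG, Aaux]
    norm_num [harm, Finset.sum_range_succ]
  have hfin : Tendsto (fun n : ℕ => G 0 - G n) atTop (nhds (G 0 - 0)) :=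
    tendsto_const_nhds.sub hGlim
  have heq : nhds (G 0 - 0) = nhds (-577 / 5832 : ℝ) := by rw [sub_zero, hG0]
  exact heq ▸ hfin
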